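/- With notation as in the context, the projection W_aff = Q ⋊ W → W restricts to a surjective group homomorphism from Γ = Stab_{W_aff}(L) onto Γ_W = Stab_W(e(L)) whose kernel is the group of translations by vectors in Q ∩ V(L); consequently it induces a group isomorphism Γ/(Q ∩ V(L)) ≅ Γ_W. -/

import Mathlib

open scoped Pointwise

/-- The action of the group of affine automorphisms of an affine space on the space itself,
by evaluation. -/
instance affineEquivApplyMulAction {k V P : Type*} [Ring k] [AddCommGroup V] [Module k V]
    [AddTorsor V P] : MulAction (P ≃ᵃ[k] P) P where
  smul g v := g v
  one_smul _ := rfl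
  mul_smul _ _ _ := rfl

/-- The affine Weyl-type group `W_aff = Q ⋊ W`: the subgroup of affine automorphisms of `V`
generated by the translations by elements of `Q` together with the elements of `W`. -/
def affGroup {V : Type*} [NormedAddCommGroup V] [NormedSpace ℝ V]
    (W : Subgroup (V ≃ₗ[ℝ] V)) (Q : AddSubgroup V) : Subgroup (V ≃ᵃ[ℝ] V) :=
  Subgroup.closure
    ({g | ∃ q ∈ Q, ∀ v : V, g v = v + q} ∪ {g | ∃ w ∈ W, ∀ v : V, g v = w v})

section Aux

variable {V : Type*} [NormedAddCommGroup V] [NormedSpace ℝ V]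

lemma linearHom_eq_of_form (g : V ≃ᵃ[ℝ] V) (w : V ≃ₗ[ℝ] V) (q : V)
    (h : ∀ v, g v = w v + q) : AffineEquiv.linearHom g = w := by
  ext v
  have h0 : g (v +ᵥ (0:V)) = g.linear v +ᵥ g 0 := g.map_vadd 0 v
  simp only [vadd_eq_add, add_zero, h, map_zero, zero_add] at h0
  have : g.linear v = w v := by
    have := h0.symm
    rwa [add_left_inj] at this
  exact this

lemma mem_affGroup_iff (W : Subgroup (V ≃ₗ[ℝ] V)) (Q : AddSubgroup V)
    (hQW : ∀ w ∈ W, ∀ q ∈ Q, (w : V ≃ₗ[ℝ] V) q ∈ Q) {g : V ≃ᵃ[ℝ] V} :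
    g ∈ affGroup W Q ↔ ∃ w ∈ W, ∃ q ∈ Q, ∀ v : V, g v = w v + q := by
  constructor
  · intro hg
    refine Subgroup.closure_induction ?_ ?_ ?_ ?_ hg
    · rintro x (⟨q, hq, hx⟩ | ⟨w, hw, hx⟩)
      · exact ⟨1, one_mem W, q, hq, fun v => by simpa using hx v⟩
      · exact ⟨w, hw, 0, zero_mem Q, fun v => by simp [hx v]⟩
    · exact ⟨1, one_mem W, 0, zero_mem Q, fun v => by simp⟩
    · rintro x y _ _ ⟨w1, hw1, q1, hq1, hx⟩ ⟨w2, hw2, q2, hq2, hy⟩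
      refine ⟨w1 * w2, mul_mem hw1 hw2, w1 q2 + q1,
        add_mem (hQW w1 hw1 q2 hq2) hq1, fun v => ?_⟩
      show x (y v) = _
      rw [hy v, hx]
      simp [map_add, add_assoc]
    · rintro x _ ⟨w, hw, q, hq, hx⟩
      refine ⟨w⁻¹, inv_mem hw, -((w⁻¹ : V ≃ₗ[ℝ] V) q),
        neg_mem (hQW w⁻¹ (inv_mem hw) q hq), fun v => ?_⟩
      have key : x ((w⁻¹ : V ≃ₗ[ℝ] V) v + -((w⁻¹ : V ≃ₗ[ℝ] V) q)) = v := by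
        rw [hx]
        have : (w : V ≃ₗ[ℝ] V) ((w⁻¹ : V ≃ₗ[ℝ] V) v + -((w⁻¹ : V ≃ₗ[ℝ] V) q))
            = v + - q := by
          rw [map_add, map_neg]
          congr 1
          · exact w.apply_symm_apply v
          · exact congrArg Neg.neg (w.apply_symm_apply q)
        rw [this]; abel
      calc x⁻¹ v = x⁻¹ (x ((w⁻¹ : V ≃ₗ[ℝ] V) v + -((w⁻¹ : V ≃ₗ[ℝ] V) q))) := by rw [key]
        _ = _ := x.symm_apply_apply _
  · rintro ⟨w, hw, q, hq, h⟩
    have hgeq : g = (AffineEquiv.constVAdd ℝ V q) * w.toAffineEquiv := by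
      ext v
      show g v = (AffineEquiv.constVAdd ℝ V q) (w.toAffineEquiv v)
      simp [h v, AffineEquiv.constVAdd_apply, add_comm]
    rw [hgeq]
    exact mul_mem
      (Subgroup.subset_closure (Or.inl ⟨q, hq, fun v => by
        simp [AffineEquiv.constVAdd_apply, add_comm]⟩))
      (Subgroup.subset_closure (Or.inr ⟨w, hw, fun v => by simp⟩))

lemma countable_Q [FiniteDimensional ℝ V] (Q : AddSubgroup V)
    (hQdisc : DiscreteTopology Q) : (Q : Set V).Countable := by
  haveI : SecondCountableTopology V := inferInstance
  haveI : SecondCountableTopology Q := Topology.IsEmbedding.secondCountableTopology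
    Topology.IsEmbedding.subtypeVal
  haveI : Countable Q :=
    TopologicalSpace.separableSpace_iff_countable.mp inferInstance
  exact Set.countable_coe_iff.mp this

lemma mem_of_line_subset (U : Submodule ℝ V) (Q : AddSubgroup V)
    (hQc : (Q : Set V).Countable) {v : V}
    (h : ∀ t : ℝ, ∃ u ∈ U, ∃ q ∈ Q, t • v = u + q) : v ∈ U := by
  by_contra hv
  set f : ℝ → V ⧸ U.toAddSubgroup := fun t => QuotientAddGroup.mk (t • v) with hf
  have hinj : Function.Injective f := by
    intro t t' htt
    have hmem : -(t • v) + t' • v ∈ U.toAddSubgroup := (QuotientAddGroup.eq).mp htt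
    have hmem' : (t' - t) • v ∈ U := by
      have : (t' - t) • v = -(t • v) + t' • v := by
        rw [sub_smul]; abel
      rw [this]; exact hmem
    by_contra hne
    have : v ∈ U := by
      have := U.smul_mem (t' - t)⁻¹ hmem'
      rwa [smul_smul, inv_mul_cancel₀ (sub_ne_zero.mpr (Ne.symm hne)), one_smul] at this
    exact hv this
  have hrange : Set.range f ⊆ (fun x : V => (QuotientAddGroup.mk x : V ⧸ U.toAddSubgroup)) ''
      (Q : Set V) := by
    rintro _ ⟨t, rfl⟩
    obtain ⟨u, hu, q, hq, htv⟩ := h t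
    refine ⟨q, hq, ?_⟩
    show _ = f t
    rw [hf]
    refine (QuotientAddGroup.eq).mpr ?_
    show -q + t • v ∈ U.toAddSubgroup
    have : -q + t • v = u := by rw [htv]; abel
    rw [this]; exact hu
  have hcble : (Set.range f).Countable := ((hQc.image _).mono hrange)
  have : (Set.univ : Set ℝ).Countable := by
    have := hcble.preimage hinj
    rwa [Set.preimage_range] at this
  exact Cardinal.not_countable_real this

end Aux

set_option synthInstance.maxHeartbeats 1000000 in
set_option maxHeartbeats 1000000 in
/-- Let `W` be a finite subgroup of `GL(V)`, `Q` a `W`-stable lattice in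
`V`, `W_aff = Q ⋊ W` acting affinely on `V`, `e : V → V/Q` the quotient map, and `L` an
affine subspace whose direction is spanned by `Q ∩ V(L)`.  Then the projection
`W_aff = Q ⋊ W → W` restricts to a surjective group homomorphism from
`Γ = Stab_{W_aff}(L)` onto `Γ_W = Stab_W(e(L))` whose kernel is the group of translations
by vectors in `Q ∩ V(L)`; consequently it induces a group isomorphism
`Γ/(Q ∩ V(L)) ≅ Γ_W`. -/
theorem stabilizer_projection_iso
    {V : Type*} [NormedAddCommGroup V] [NormedSpace ℝ V] [FiniteDimensional ℝ V]
    (W : Subgroup (V ≃ₗ[ℝ] V)) (hWfin : (W : Set (V ≃ₗ[ℝ] V)).Finite)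
    (Q : AddSubgroup V) (hQdisc : DiscreteTopology Q)
    (hQW : ∀ w ∈ W, ∀ q ∈ Q, (w : V ≃ₗ[ℝ] V) q ∈ Q)
    (L : AffineSubspace ℝ V) (hLne : (L : Set V).Nonempty)
    (hLspan : Submodule.span ℝ ((Q : Set V) ∩ (L.direction : Set V)) = L.direction) :
    (let Γ : Subgroup (V ≃ᵃ[ℝ] V) :=
       affGroup W Q ⊓ MulAction.stabilizer (V ≃ᵃ[ℝ] V) (L : Set V)
     let ΓW : Subgroup (V ≃ₗ[ℝ] V) :=
       W ⊓ MulAction.stabilizer (V ≃ₗ[ℝ] V)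
         ((QuotientAddGroup.mk : V → V ⧸ Q) ⁻¹'
           ((QuotientAddGroup.mk : V → V ⧸ Q) '' (L : Set V)))
     let ρ : ↥Γ →* (V ≃ₗ[ℝ] V) := AffineEquiv.linearHom.comp Γ.subtype
     -- `ρ` maps `Γ` onto `Γ_W`
     ρ.range = ΓW ∧
     -- the kernel of `ρ` consists of the translations by vectors of `Q ∩ V(L)`
     (∀ g : ↥Γ, g ∈ ρ.ker ↔
        ∃ q ∈ Q, q ∈ L.direction ∧ ∀ v : V, (g : V ≃ᵃ[ℝ] V) v = v + q) ∧
     -- consequently `Γ/(Q ∩ V(L)) ≅ Γ_W`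
     Nonempty ((↥Γ ⧸ ρ.ker) ≃* ↥ΓW)) := by
  
  intro Γ ΓW ρ
  obtain ⟨p₀, hp₀⟩ := hLne
  have hQc : (Q : Set V).Countable := countable_Q Q hQdisc
  set S : Set V := ((QuotientAddGroup.mk : V → V ⧸ Q) ⁻¹'
      ((QuotientAddGroup.mk : V → V ⧸ Q) '' (L : Set V))) with hSdef
  have hS : ∀ x : V, x ∈ S ↔ ∃ p ∈ (L : Set V), ∃ q ∈ Q, x = p + q := by
    intro x
    constructor
    · rintro ⟨p, hp, hpx⟩
      exact ⟨p, hp, -p + x, (QuotientAddGroup.eq).mp hpx, by abel⟩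
    · rintro ⟨p, hp, q, hq, rfl⟩
      exact ⟨p, hp, (QuotientAddGroup.eq).mpr (by simpa using hq)⟩
  have hsmulA : ∀ (g : V ≃ᵃ[ℝ] V) (v : V), g • v = g v := fun _ _ => rfl
  have hsmulL : ∀ (w : V ≃ₗ[ℝ] V) (v : V), w • v = w v := fun _ _ => rfl
  -- step: if g has form (w', q') and maps L into L, then w' maps S into S
  have step : ∀ (g : V ≃ᵃ[ℝ] V) (w' : V ≃ₗ[ℝ] V), w' ∈ W → ∀ (q' : V), q' ∈ Q →
      (∀ v, g v = w' v + q') → (∀ x ∈ (L : Set V), g x ∈ (L : Set V)) →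
      ∀ s ∈ S, w' s ∈ S := by
    intro g w' hw' q' hq' hform hgL s hs
    obtain ⟨p, hp, q, hq, rfl⟩ := (hS s).mp hs
    have hcalc : w' (p + q) = g p + (w' q - q') := by
      rw [map_add, hform p]; abel
    rw [hcalc]
    exact (hS _).mpr ⟨g p, hgL p hp, w' q - q',
      sub_mem (hQW w' hw' q hq) hq', rfl⟩
  -- members of Γ map L bijectively to L
  have hΓL : ∀ g : ↥Γ, ∀ x ∈ (L : Set V), (g : V ≃ᵃ[ℝ] V) x ∈ (L : Set V) := by
    intro g x hx
    have hst : (g : V ≃ᵃ[ℝ] V) • (L : Set V) = (L : Set V) :=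
      (MulAction.mem_stabilizer_iff).mp g.2.2
    have : (g : V ≃ᵃ[ℝ] V) • x ∈ (g : V ≃ᵃ[ℝ] V) • (L : Set V) :=
      Set.smul_mem_smul_set hx
    rwa [hst, hsmulA] at this
  -- the range is contained in ΓW
  have hsub1 : ρ.range ≤ ΓW := by
    rintro w ⟨γ, rfl⟩
    obtain ⟨w₁, hw₁, q₁, hq₁, hform₁⟩ :=
      (mem_affGroup_iff W Q hQW).mp γ.2.1
    have hlin₁ : ρ γ = w₁ := linearHom_eq_of_form _ _ _ hform₁
    obtain ⟨w₂, hw₂, q₂, hq₂, hform₂⟩ :=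
      (mem_affGroup_iff W Q hQW).mp (γ⁻¹ : ↥Γ).2.1
    have hlin₂ : ρ γ⁻¹ = w₂ := linearHom_eq_of_form _ _ _ hform₂
    have hsymm : ρ γ⁻¹ = (ρ γ)⁻¹ := map_inv ρ γ
    refine ⟨hlin₁ ▸ hw₁, ?_⟩
    show ρ γ • S = S
    apply subset_antisymm
    · rintro _ ⟨s, hs, rfl⟩
      change (ρ γ) s ∈ S
      rw [hlin₁]
      exact step _ w₁ hw₁ q₁ hq₁ hform₁ (hΓL γ) s hs
    · intro s hs
      have h2 : w₂ s ∈ S := step _ w₂ hw₂ q₂ hq₂ hform₂ (hΓL γ⁻¹) s hs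
      refine ⟨w₂ s, h2, ?_⟩
      change (ρ γ) (w₂ s) = s
      have : (ρ γ) (w₂ s) = (ρ γ) (((ρ γ)⁻¹ : V ≃ₗ[ℝ] V) s) := by
        rw [← hsymm, hlin₂]
      rw [this]
      exact (ρ γ).apply_symm_apply s
  -- key direction-stability lemma
  have hdirstep : ∀ w : V ≃ₗ[ℝ] V, (∀ s ∈ S, w s ∈ S) →
      ∀ u ∈ L.direction, w u ∈ L.direction := by
    intro w hwS u hu
    apply mem_of_line_subset L.direction Q hQc
    intro t
    have htu : t • u ∈ L.direction := L.direction.smul_mem t hu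
    have hx' : (t • u) +ᵥ p₀ ∈ (L : Set V) :=
      AffineSubspace.vadd_mem_of_mem_direction htu hp₀
    have hS1 : ((t • u) +ᵥ p₀ : V) ∈ S :=
      (hS _).mpr ⟨_, hx', 0, zero_mem Q, by abel⟩
    have hS2 : (p₀ : V) ∈ S := (hS _).mpr ⟨p₀, hp₀, 0, zero_mem Q, by abel⟩
    obtain ⟨p₁, hp₁, q₁, hq₁, he₁⟩ := (hS _).mp (hwS _ hS1)
    obtain ⟨p₂, hp₂, q₂, hq₂, he₂⟩ := (hS _).mp (hwS _ hS2)
    refine ⟨p₁ - p₂, ?_, q₁ - q₂, sub_mem hq₁ hq₂, ?_⟩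
    · exact AffineSubspace.vsub_mem_direction hp₁ hp₂
    · have : t • w u = w ((t • u) +ᵥ p₀) - w p₀ := by
        rw [vadd_eq_add, map_add, map_smul]; abel
      rw [this, he₁, he₂]; abel
  -- ΓW is contained in the range
  have hsub2 : ΓW ≤ ρ.range := by
    rintro w ⟨hwW, hwS'⟩
    have hwSeq : w • S = S := hwS'
    have hwS : ∀ s ∈ S, w s ∈ S := by
      intro s hs
      have : w • s ∈ w • S := Set.smul_mem_smul_set hs
      rwa [hwSeq, hsmulL] at this
    have hwS2 : ∀ s ∈ S, w.symm s ∈ S := by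
      intro s hs
      rw [← hwSeq] at hs
      obtain ⟨y, hy, rfl⟩ := hs
      change w.symm (w y) ∈ S
      rw [w.symm_apply_apply]
      exact hy
    have hdir : ∀ u ∈ L.direction, w u ∈ L.direction := hdirstep w hwS
    have hdir2 : ∀ u ∈ L.direction, w.symm u ∈ L.direction := hdirstep w.symm hwS2
    -- decompose w p₀
    obtain ⟨x₀, hx₀, q₀, hq₀, hwp₀⟩ := (hS _).mp (hwS p₀ ((hS _).mpr
      ⟨p₀, hp₀, 0, zero_mem Q, by abel⟩))
    set g : V ≃ᵃ[ℝ] V := (AffineEquiv.constVAdd ℝ V (-q₀)) * w.toAffineEquiv with hgdef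
    have hgform : ∀ v : V, g v = w v + (-q₀) := by
      intro v
      show (AffineEquiv.constVAdd ℝ V (-q₀)) (w.toAffineEquiv v) = w v + (-q₀)
      simp [AffineEquiv.constVAdd_apply, add_comm]
    have hgaff : g ∈ affGroup W Q :=
      (mem_affGroup_iff W Q hQW).mpr ⟨w, hwW, -q₀, neg_mem hq₀, hgform⟩
    have hgstab : g ∈ MulAction.stabilizer (V ≃ᵃ[ℝ] V) (L : Set V) := by
      show g • (L : Set V) = L
      apply subset_antisymm
      · rintro _ ⟨x, hx, rfl⟩
        change g x ∈ (L : Set V)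
        rw [hgform]
        have hx2 : w x + (-q₀) = (w (x - p₀)) +ᵥ x₀ := by
          rw [map_sub, vadd_eq_add, hwp₀]; abel
        rw [hx2]
        exact AffineSubspace.vadd_mem_of_mem_direction
          (hdir _ (AffineSubspace.vsub_mem_direction hx hp₀)) hx₀
      · intro y hy
        refine ⟨w.symm (y - x₀) + p₀, ?_, ?_⟩
        · have : w.symm (y - x₀) + p₀ = (w.symm (y - x₀)) +ᵥ p₀ := rfl
          rw [this]
          exact AffineSubspace.vadd_mem_of_mem_direction
            (hdir2 _ (AffineSubspace.vsub_mem_direction hy hx₀)) hp₀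
        · change g (w.symm (y - x₀) + p₀) = y
          rw [hgform, map_add, w.apply_symm_apply, hwp₀]
          abel
    exact ⟨⟨g, hgaff, hgstab⟩, linearHom_eq_of_form g w (-q₀) hgform⟩
  have hrange : ρ.range = ΓW := le_antisymm hsub1 hsub2
  refine ⟨hrange, ?_, ?_⟩
  · intro g
    constructor
    · intro hker
      have hlin : ρ g = 1 := hker
      obtain ⟨w₁, hw₁, q₁, hq₁, hform₁⟩ :=
        (mem_affGroup_iff W Q hQW).mp g.2.1
      have hw₁1 : w₁ = 1 := by
        rw [← linearHom_eq_of_form _ _ _ hform₁]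
        exact hlin.symm ▸ rfl
      have hform : ∀ v : V, (g : V ≃ᵃ[ℝ] V) v = v + q₁ := by
        intro v; rw [hform₁ v, hw₁1]; rfl
      refine ⟨q₁, hq₁, ?_, hform⟩
      have hgp₀ : (g : V ≃ᵃ[ℝ] V) p₀ ∈ (L : Set V) := hΓL g p₀ hp₀
      have : q₁ = ((g : V ≃ᵃ[ℝ] V) p₀) - p₀ := by rw [hform p₀]; abel
      rw [this]
      exact AffineSubspace.vsub_mem_direction hgp₀ hp₀
    · rintro ⟨q, hq, hqd, hform⟩
      show ρ g = 1
      refine linearHom_eq_of_form _ 1 q (fun v => ?_)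
      show (g : V ≃ᵃ[ℝ] V) v = (1 : V ≃ₗ[ℝ] V) v + q
      rw [hform v]; rfl
  · exact ⟨(QuotientGroup.quotientKerEquivRange ρ).trans
      (MulEquiv.subgroupCongr hrange)⟩
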